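/- Let d ≥ 2, set ε = 11^{−d}/2, and for n > 1 set k(n) = ⌊n/(30√d·log n)⌋ − 1. Let m_0 > 1 be such that for all m ≥ m_0: m > e^{4√d}, √m ≤ k(m), 2^{−√m} ≤ e^{−(log m)^d}, and ε > (3m)^d·(2^{−√m} + e^{−(log m)^d}). Let p : ℝ → ℝ satisfy 0 ≤ p(n) ≤ 1 for all n > 1, p(m) < ε for all m ∈ (1, m_0], and p(n) ≤ (n/log n)^d·(11^d·p(3·log n))^{k(n)} + (3n)^d·e^{−(log n)^d} for all n > m_0. Then p(n) < ε for every n > 1, and moreover p(n) ≤ 2·(3n)^d·e^{−(log n)^d} for every n > m_0. -/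
import Mathlib


noncomputable section

/-- `ε = 11^{−d}/2`. -/
def epsD (d : ℕ) : ℝ := ((11 : ℝ) ^ d)⁻¹ / 2

/-- `k(n) = ⌊n/(30√d·log n)⌋ − 1`. -/
def kD (d : ℕ) (n : ℝ) : ℤ := ⌊n / (30 * Real.sqrt d * Real.log n)⌋ - 1

/-- Let `d ≥ 2`, set `ε = 11^{−d}/2`, and for `n > 1` set
`k(n) = ⌊n/(30√d·log n)⌋ − 1`. Let `m₀ > 1` be such that for all `m ≥ m₀`:
`m > e^{4√d}`, `√m ≤ k(m)`, `2^{−√m} ≤ e^{−(log m)^d}`, and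
`ε > (3m)^d·(2^{−√m} + e^{−(log m)^d})`. Let `p : ℝ → ℝ` satisfy `0 ≤ p(n) ≤ 1`
for all `n > 1`, `p(m) < ε` for all `m ∈ (1, m₀]`, and
`p(n) ≤ (n/log n)^d·(11^d·p(3·log n))^{k(n)} + (3n)^d·e^{−(log n)^d}` for all
`n > m₀`. Then `p(n) < ε` for every `n > 1`, and moreover
`p(n) ≤ 2·(3n)^d·e^{−(log n)^d}` for every `n > m₀`. -/
theorem statement17 (d : ℕ) (hd : 2 ≤ d) (m₀ : ℝ) (hm₀ : 1 < m₀)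
    (h1 : ∀ m : ℝ, m₀ ≤ m → Real.exp (4 * Real.sqrt d) < m)
    (h2 : ∀ m : ℝ, m₀ ≤ m → Real.sqrt m ≤ (kD d m : ℝ))
    (h3 : ∀ m : ℝ, m₀ ≤ m →
      (2 : ℝ) ^ (-Real.sqrt m) ≤ Real.exp (-(Real.log m) ^ d))
    (h4 : ∀ m : ℝ, m₀ ≤ m →
      (3 * m) ^ d * ((2 : ℝ) ^ (-Real.sqrt m) + Real.exp (-(Real.log m) ^ d))
        < epsD d)
    (p : ℝ → ℝ)
    (hp0 : ∀ n : ℝ, 1 < n → 0 ≤ p n) (hp1 : ∀ n : ℝ, 1 < n → p n ≤ 1)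
    (hsmall : ∀ m : ℝ, 1 < m → m ≤ m₀ → p m < epsD d)
    (hrec : ∀ n : ℝ, m₀ < n →
      p n ≤ (n / Real.log n) ^ d * ((11 : ℝ) ^ d * p (3 * Real.log n)) ^ (kD d n)
        + (3 * n) ^ d * Real.exp (-(Real.log n) ^ d)) :
    (∀ n : ℝ, 1 < n → p n < epsD d) ∧
    (∀ n : ℝ, m₀ < n → p n ≤ 2 * (3 * n) ^ d * Real.exp (-(Real.log n) ^ d)) := by
  have h11 : (0:ℝ) < 11 ^ d := by positivity
  have hmul : (11:ℝ) ^ d * epsD d = 1 / 2 := by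
    unfold epsD; field_simp
  have key : ∀ N : ℕ, ∀ n : ℝ, 1 < n → ⌊n⌋₊ ≤ N →
      (m₀ < n → p n ≤ (3 * n) ^ d *
        ((2:ℝ) ^ (-Real.sqrt n) + Real.exp (-(Real.log n) ^ d)))
      ∧ p n < epsD d := by
    intro N
    induction N with
    | zero =>
      intro n hn hfl
      exfalso
      have : (1:ℕ) ≤ ⌊n⌋₊ := Nat.le_floor (by exact_mod_cast hn.le)
      omega
    | succ N ih =>
      intro n hn hfl
      by_cases hmn : n ≤ m₀
      · exact ⟨fun h => absurd h (not_lt.mpr hmn), hsmall n hn hmn⟩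
      push_neg at hmn
      have hm : m₀ ≤ n := hmn.le
      have hexp : Real.exp (4 * Real.sqrt d) < n := h1 n hm
      have hd1 : (1:ℝ) ≤ Real.sqrt d := by
        rw [show (1:ℝ) = Real.sqrt 1 by simp]
        exact Real.sqrt_le_sqrt (by exact_mod_cast Nat.one_le_of_lt hd)
      have hn0 : (0:ℝ) < n := by linarith
      have hlog4 : 4 < Real.log n := by
        have hlt : 4 * Real.sqrt d < Real.log n :=
          (Real.lt_log_iff_exp_lt hn0).mpr hexp
        linarith
      have h36 : (36:ℝ) < n := by
        have he4 : Real.exp 4 < n := by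
          have h' : Real.exp 4 < Real.exp (Real.log n) := Real.exp_lt_exp.mpr hlog4
          rwa [Real.exp_log hn0] at h'
        have he1 := Real.exp_one_gt_d9
        have h4e : Real.exp 4 = Real.exp 1 ^ 4 := by
          rw [← Real.exp_nat_mul]; norm_num
        have h27 : (2.7:ℝ) ^ 4 < Real.exp 1 ^ 4 := by
          apply pow_lt_pow_left₀ (by linarith) (by norm_num)
          norm_num
        nlinarith [h27]
      have hsq6 : 6 < Real.sqrt n := by
        have h36' : Real.sqrt 36 < Real.sqrt n := Real.sqrt_lt_sqrt (by norm_num) h36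
        have h6 : Real.sqrt 36 = 6 := by
          rw [show (36:ℝ) = 6 ^ 2 by norm_num, Real.sqrt_sq (by norm_num)]
        linarith
      have hlogsub : 3 * Real.log n < n - 1 := by
        have hls : Real.log (Real.sqrt n) ≤ Real.sqrt n - 1 :=
          Real.log_le_sub_one_of_pos (Real.sqrt_pos.mpr hn0)
        have hlogsq : Real.log (Real.sqrt n) = Real.log n / 2 := Real.log_sqrt hn0.le
        nlinarith [Real.sq_sqrt hn0.le]
      set t := 3 * Real.log n with ht
      have ht1 : 1 < t := by simp only [ht]; linarith
      have hflt : ⌊t⌋₊ ≤ N := by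
        have hf1 : (⌊t⌋₊ : ℝ) ≤ t := Nat.floor_le (by linarith)
        have hf2 : ⌊t⌋₊ + 1 ≤ ⌊n⌋₊ := Nat.le_floor (by push_cast; linarith)
        omega
      have hpt : p t < epsD d := by
        by_cases hc : t ≤ m₀
        · exact hsmall t ht1 hc
        · exact (ih t ht1 hflt).2
      -- main bound
      have hk : Real.sqrt n ≤ (kD d n : ℝ) := h2 n hm
      have hk0 : 0 ≤ kD d n := by
        have : (0:ℝ) ≤ (kD d n : ℝ) := by linarith
        exact_mod_cast this
      set K := (kD d n).toNat with hKdef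
      have hKk : (K : ℤ) = kD d n := Int.toNat_of_nonneg hk0
      have hKr : Real.sqrt n ≤ (K : ℝ) := by
        rw [← hKk] at hk; exact_mod_cast hk
      set b := (11:ℝ) ^ d * p t with hbdef
      have hb0 : 0 ≤ b := mul_nonneg h11.le (hp0 t ht1)
      have hbh : b ≤ 1 / 2 := by
        rw [← hmul]
        exact mul_le_mul_of_nonneg_left hpt.le h11.le
      have hzpow : b ^ (kD d n) = b ^ K := by rw [← hKk, zpow_natCast]
      have hpow : b ^ K ≤ (2:ℝ) ^ (-Real.sqrt n) := by
        calc b ^ K ≤ (1/2 : ℝ) ^ K := pow_le_pow_left₀ hb0 hbh K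
          _ = (2:ℝ) ^ (-(K:ℝ)) := by
              rw [Real.rpow_neg (by norm_num), Real.rpow_natCast]
              rw [div_pow, one_pow, one_div]
          _ ≤ (2:ℝ) ^ (-Real.sqrt n) :=
              Real.rpow_le_rpow_of_exponent_le one_le_two (by linarith)
      have hdivle : (n / Real.log n) ^ d ≤ (3 * n) ^ d := by
        apply pow_le_pow_left₀ (by positivity)
        have : n / Real.log n ≤ n := div_le_self hn0.le (by linarith)
        linarith
      have hbound : p n ≤ (3 * n) ^ d *
          ((2:ℝ) ^ (-Real.sqrt n) + Real.exp (-(Real.log n) ^ d)) := by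
        have hr := hrec n hmn
        have hterm : (n / Real.log n) ^ d * b ^ (kD d n)
            ≤ (3 * n) ^ d * (2:ℝ) ^ (-Real.sqrt n) := by
          rw [hzpow]
          exact mul_le_mul hdivle hpow (pow_nonneg hb0 K) (by positivity)
        calc p n ≤ (n / Real.log n) ^ d * b ^ (kD d n)
              + (3 * n) ^ d * Real.exp (-(Real.log n) ^ d) := hr
          _ ≤ (3 * n) ^ d * (2:ℝ) ^ (-Real.sqrt n)
              + (3 * n) ^ d * Real.exp (-(Real.log n) ^ d) := by linarith
          _ = (3 * n) ^ d *
              ((2:ℝ) ^ (-Real.sqrt n) + Real.exp (-(Real.log n) ^ d)) := by ring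
      exact ⟨fun _ => hbound, hbound.trans_lt (h4 n hm)⟩
  constructor
  · intro n hn
    exact (key ⌊n⌋₊ n hn le_rfl).2
  · intro n hn
    have hn1 : 1 < n := lt_trans hm₀ hn
    have h₁ := (key ⌊n⌋₊ n hn1 le_rfl).1 hn
    have h₃ := h3 n hn.le
    have hpos : (0:ℝ) ≤ (3 * n) ^ d := by positivity
    nlinarith [mul_le_mul_of_nonneg_left h₃ hpos]
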